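/- In a linear Jaco graph with f(x) = mx + c, if vertices v_i and v_{i+1} both attain full degree (d(v_i) = f(i) and d(v_{i+1}) = f(i+1)), and i', j' are the maximal indices such that arcs (v_i, v_{i'}) and (v_{i+1}, v_{j'}) exist, then j' − i' ∈ {m, m+1}. -/
import Mathlib


/-- In-degree of vertex `j` in the infinite linear Jaco graph for `f x = m * x + c`:
`d⁻(v_j)` is the number of tails `1 ≤ i < j` with `f i + i - d⁻(v_i) ≥ j`
(stated subtraction-free as `j + d⁻(v_i) ≤ m * i + c + i`). -/
noncomputable def jacoIndeg (m c : ℕ) (j : ℕ) : ℕ :=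
  Nat.strongRecOn j (fun j ih =>
    ((Finset.Ico 1 j).attach.filter (fun i =>
      j + ih i.1 (Finset.mem_Ico.mp i.2).2 ≤ m * i.1 + c + i.1)).card)

/-- `(v_i, v_j)` is an arc of the infinite Jaco graph `J_∞(mx + c)` iff `1 ≤ i < j` and
`f(i) + i - d⁻(v_i) ≥ j`. -/
def JacoArc (m c i j : ℕ) : Prop :=
  1 ≤ i ∧ i < j ∧ j + jacoIndeg m c i ≤ m * i + c + i

noncomputable instance (m c i j : ℕ) : Decidable (JacoArc m c i j) := by
  unfold JacoArc; infer_instance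

/-- Out-degree of `v_i` in the infinite Jaco graph `J_∞(mx + c)`. -/
noncomputable def jacoOutdegInf (m c i : ℕ) : ℕ := {j | JacoArc m c i j}.ncard

/-- Out-degree of `v_i` in the finite Jaco graph `J_n(mx + c)`. -/
noncomputable def jacoOutdeg (m c n i : ℕ) : ℕ :=
  ((Finset.Icc 1 n).filter (fun j => JacoArc m c i j)).card

/-- Total degree of `v_i` in the underlying graph of `J_n(mx + c)`
(for `i ≤ n` the in-degree in `J_n` agrees with that in `J_∞`). -/
noncomputable def jacoDeg (m c n i : ℕ) : ℕ := jacoIndeg m c i + jacoOutdeg m c n i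

/-- Number of arcs of the finite Jaco graph `J_n(mx + c)`. -/
noncomputable def jacoArcs (m c n : ℕ) : ℕ :=
  (((Finset.Icc 1 n) ×ˢ (Finset.Icc 1 n)).filter (fun p => JacoArc m c p.1 p.2)).card

lemma card_filter_attach' {α} (s : Finset α) (p : α → Prop) [DecidablePred p] :
    (s.attach.filter (fun i => p i.1)).card = (s.filter p).card := by
  refine Finset.card_bij (fun a _ => a.1) ?_ ?_ ?_
  · intro a ha
    simp only [Finset.mem_filter] at ha ⊢
    exact ⟨a.2, ha.2⟩
  · intro a ha b hb h
    exact Subtype.ext h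
  · intro b hb
    simp only [Finset.mem_filter] at hb
    exact ⟨⟨b, hb.1⟩, by simp [hb.2], rfl⟩

lemma jacoIndeg_eq (m c j : ℕ) : jacoIndeg m c j =
    ((Finset.Ico 1 j).filter (fun i => j + jacoIndeg m c i ≤ m * i + c + i)).card := by
  rw [jacoIndeg, Nat.strongRecOn_eq]
  exact card_filter_attach' (Finset.Ico 1 j) (fun x => j + jacoIndeg m c x ≤ m * x + c + x)

lemma jacoIndeg_eq_arc (m c j : ℕ) : jacoIndeg m c j =
    ((Finset.Ico 1 j).filter (fun i => JacoArc m c i j)).card := by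
  rw [jacoIndeg_eq]
  congr 1
  apply Finset.filter_congr
  intro t ht
  simp only [Finset.mem_Ico] at ht
  simp only [JacoArc, eq_iff_iff]
  constructor
  · exact fun h => ⟨ht.1, ht.2, h⟩
  · exact fun h => h.2.2

lemma jacoIndeg_le (m c j : ℕ) : jacoIndeg m c j ≤ j - 1 := by
  rw [jacoIndeg_eq]
  calc _ ≤ (Finset.Ico 1 j).card := Finset.card_filter_le _ _
  _ = j - 1 := Nat.card_Ico 1 j

/-- Head bound: the largest possible head of an arc out of `i`. -/
noncomputable def jacoN (m c i : ℕ) : ℕ := m * i + c + i - jacoIndeg m c i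

lemma jacoN_add (m c i : ℕ) : jacoIndeg m c i + jacoN m c i = m * i + c + i := by
  have h := jacoIndeg_le m c i
  have : (0:ℕ) ≤ m * i := Nat.zero_le _
  unfold jacoN
  omega

lemma arc_iff_N (m c i j : ℕ) :
    JacoArc m c i j ↔ 1 ≤ i ∧ i < j ∧ j ≤ jacoN m c i := by
  have h := jacoN_add m c i
  unfold JacoArc
  omega

lemma indeg_succ_le (m c j : ℕ) : jacoIndeg m c (j + 1) ≤ jacoIndeg m c j + 1 := by
  rw [jacoIndeg_eq_arc m c (j+1), jacoIndeg_eq_arc m c j]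
  have hsub : (Finset.Ico 1 (j+1)).filter (fun i => JacoArc m c i (j+1)) ⊆
      insert j ((Finset.Ico 1 j).filter (fun i => JacoArc m c i j)) := by
    intro t ht
    simp only [Finset.mem_filter, Finset.mem_Ico, Finset.mem_insert] at ht ⊢
    rcases eq_or_ne t j with rfl | hne
    · exact Or.inl rfl
    · refine Or.inr ⟨⟨ht.1.1, by omega⟩, ?_⟩
      obtain ⟨h1, h2, h3⟩ := ht.2
      exact ⟨h1, by omega, by omega⟩
  calc _ ≤ (insert j ((Finset.Ico 1 j).filter (fun i => JacoArc m c i j))).card :=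
        Finset.card_le_card hsub
  _ ≤ _ := Finset.card_insert_le _ _

lemma jacoN_strictMono (m c : ℕ) (hm : 1 ≤ m) : StrictMono (jacoN m c) := by
  apply strictMono_nat_of_lt_succ
  intro s
  have e1 := jacoN_add m c s
  have e2 := jacoN_add m c (s + 1)
  have h2 := indeg_succ_le m c s
  have hmul : m * (s + 1) = m * s + m := by ring
  omega


/-- If `d(v_i) = f(i)` and `d(v_{i+1}) = f(i+1)` in `J_n(mx+c)` and `i'`, `j'` are the
maximal indices with arcs `(v_i, v_{i'})` and `(v_{i+1}, v_{j'})`, then `j' - i' ∈ {m, m+1}`. -/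
theorem jaco_full_degree_heads (m c n i i' j' : ℕ) (hm : 1 ≤ m)
    (hdi : jacoDeg m c n i = m * i + c)
    (hdi1 : jacoDeg m c n (i + 1) = m * (i + 1) + c)
    (hi'arc : JacoArc m c i i') (hi'n : i' ≤ n)
    (hi'max : ∀ t : ℕ, t ≤ n → JacoArc m c i t → t ≤ i')
    (hj'arc : JacoArc m c (i + 1) j') (hj'n : j' ≤ n)
    (hj'max : ∀ t : ℕ, t ≤ n → JacoArc m c (i + 1) t → t ≤ j') :
    j' - i' = m ∨ j' - i' = m + 1 := by
  have e1 := jacoN_add m c i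
  have e2 := jacoN_add m c (i + 1)
  have hmul : m * (i + 1) = m * i + m := by ring
  rw [arc_iff_N] at hi'arc hj'arc
  obtain ⟨h1i, hii', hi'N⟩ := hi'arc
  obtain ⟨-, hij', hj'N⟩ := hj'arc
  -- outdegree computation for a generic tail t
  have key : ∀ t : ℕ, 1 ≤ t →
      jacoOutdeg m c n t = min n (jacoN m c t) - t := by
    intro t h1t
    unfold jacoOutdeg
    have : (Finset.Icc 1 n).filter (fun j => JacoArc m c t j) =
        Finset.Ioc t (min n (jacoN m c t)) := by
      ext j
      simp only [Finset.mem_filter, Finset.mem_Icc, Finset.mem_Ioc, arc_iff_N]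
      omega
    rw [this, Nat.card_Ioc]
  have hout_i := key i h1i
  have hout_i1 := key (i + 1) (by omega)
  unfold jacoDeg at hdi hdi1
  rw [hout_i] at hdi
  rw [hout_i1] at hdi1
  -- derive i' = N i and N i ≤ n
  have hNi_le_n : jacoN m c i ≤ n := by omega
  have hNi1_le_n : jacoN m c (i + 1) ≤ n := by omega
  have hi'eq : i' = jacoN m c i := by
    have := hi'max (jacoN m c i) hNi_le_n
      ((arc_iff_N m c i _).mpr ⟨h1i, by omega, le_rfl⟩)
    omega
  have hj'eq : j' = jacoN m c (i + 1) := by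
    have := hj'max (jacoN m c (i + 1)) hNi1_le_n
      ((arc_iff_N m c (i + 1) _).mpr ⟨by omega, by omega, le_rfl⟩)
    omega
  -- the set S of tails of i, and the exceptional set with N t = i
  set S := (Finset.Ico 1 i).filter (fun t => JacoArc m c t i) with hS
  have hScard : jacoIndeg m c i = S.card := jacoIndeg_eq_arc m c i
  set D := (S.filter (fun t => jacoN m c t = i)).card with hD
  have hD1 : D ≤ 1 := by
    rw [hD]
    apply Finset.card_le_one.mpr
    intro a ha b hb
    simp only [Finset.mem_filter] at ha hb
    exact (jacoN_strictMono m c hm).injective (ha.2.trans hb.2.symm)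
  -- indeg (i+1) = (S.filter (N ≠ i)).card + 1
  have harc_i_succ : JacoArc m c i (i + 1) :=
    (arc_iff_N m c i _).mpr ⟨h1i, by omega, by omega⟩
  have hsplit : jacoIndeg m c (i + 1) =
      (S.filter (fun t => jacoN m c t ≠ i)).card + 1 := by
    rw [jacoIndeg_eq_arc]
    have hIco : Finset.Ico 1 (i + 1) = insert i (Finset.Ico 1 i) := by
      ext t
      simp only [Finset.mem_Ico, Finset.mem_insert]
      omega
    rw [hIco, Finset.filter_insert, if_pos harc_i_succ,
      Finset.card_insert_of_notMem (by
        simp only [Finset.mem_filter, Finset.mem_Ico]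
        omega)]
    have heq : (Finset.Ico 1 i).filter (fun t => JacoArc m c t (i + 1)) =
        S.filter (fun t => jacoN m c t ≠ i) := by
      ext t
      simp only [Finset.mem_filter, Finset.mem_Ico, hS, arc_iff_N]
      omega
    rw [heq]
  have hDsum : (S.filter (fun t => jacoN m c t = i)).card +
      (S.filter (fun t => jacoN m c t ≠ i)).card = S.card :=
    Finset.card_filter_add_card_filter_not _
  have e3 : jacoIndeg m c (i + 1) + D = jacoIndeg m c i + 1 := by omega
  omega
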